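/- arXiv:1707.05027 — 4 statements merged into one kernel-verified Lean document; each statement's English description precedes it below -/
import Mathlib

section
/- Let n ≥ 1 and let 𝔻 ⊂ ℝⁿ be the open unit ball. There is no pair of continuous functions r : 𝔻 → (0,1] and R : ((0,1] × 𝔻) × 𝔻 → (0,1] such that r₁ · R((r₁,c₁),P) = r(r₁·P + c₁) for all r₁ ∈ (0,1], c₁ ∈ 𝔻, P ∈ 𝔻 with r₁·P + c₁ ∈ 𝔻 (i.e. for all data where the affine map x ↦ r₁x + c₁ sends 𝔻 into 𝔻). -/
open Metric Set

/-- there is no pair of continuous functions `r : 𝔻 → (0,1]` and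
`R : ((0,1] × 𝔻) × 𝔻 → (0,1]` with `r₁ * R((r₁,c₁),P) = r (r₁ • P + c₁)` whenever the
affine map `x ↦ r₁ • x + c₁` sends the open unit ball `𝔻 ⊆ ℝⁿ` into itself. -/
theorem stmt3 (n : ℕ) (hn : 1 ≤ n) :
    ¬ ∃ (r : EuclideanSpace ℝ (Fin n) → ℝ)
        (R : (ℝ × EuclideanSpace ℝ (Fin n)) × EuclideanSpace ℝ (Fin n) → ℝ),
      ContinuousOn r (ball (0 : EuclideanSpace ℝ (Fin n)) 1) ∧
      (∀ P ∈ ball (0 : EuclideanSpace ℝ (Fin n)) 1, r P ∈ Ioc (0 : ℝ) 1) ∧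
      ContinuousOn R {p : (ℝ × EuclideanSpace ℝ (Fin n)) × EuclideanSpace ℝ (Fin n) |
        p.1.1 ∈ Ioc (0 : ℝ) 1 ∧ p.1.2 ∈ ball (0 : EuclideanSpace ℝ (Fin n)) 1 ∧
        p.2 ∈ ball (0 : EuclideanSpace ℝ (Fin n)) 1} ∧
      (∀ p : (ℝ × EuclideanSpace ℝ (Fin n)) × EuclideanSpace ℝ (Fin n),
        p.1.1 ∈ Ioc (0 : ℝ) 1 → p.1.2 ∈ ball (0 : EuclideanSpace ℝ (Fin n)) 1 →
        p.2 ∈ ball (0 : EuclideanSpace ℝ (Fin n)) 1 → R p ∈ Ioc (0 : ℝ) 1) ∧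
      (∀ (r₁ : ℝ) (c₁ P : EuclideanSpace ℝ (Fin n)),
        r₁ ∈ Ioc (0 : ℝ) 1 → c₁ ∈ ball (0 : EuclideanSpace ℝ (Fin n)) 1 →
        P ∈ ball (0 : EuclideanSpace ℝ (Fin n)) 1 →
        (∀ x ∈ ball (0 : EuclideanSpace ℝ (Fin n)) 1,
          r₁ • x + c₁ ∈ ball (0 : EuclideanSpace ℝ (Fin n)) 1) →
        r₁ * R ((r₁, c₁), P) = r (r₁ • P + c₁)) := by
  rintro ⟨r, R, -, hr, -, hR, heq⟩
  have h0 : (0 : EuclideanSpace ℝ (Fin n)) ∈ ball (0 : EuclideanSpace ℝ (Fin n)) 1 := by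
    simp
  obtain ⟨hr0pos, hr0le⟩ := hr 0 h0
  set a : ℝ := r 0 / 2 with ha
  have hapos : 0 < a := by positivity
  have halt : a < 1 := by
    have : r 0 / 2 ≤ 1 / 2 := by linarith
    linarith
  have haIoc : a ∈ Ioc (0 : ℝ) 1 := ⟨hapos, le_of_lt halt⟩
  have hmap : ∀ x ∈ ball (0 : EuclideanSpace ℝ (Fin n)) 1,
      a • x + (0 : EuclideanSpace ℝ (Fin n)) ∈ ball (0 : EuclideanSpace ℝ (Fin n)) 1 := by
    intro x hx
    rw [mem_ball_zero_iff] at hx ⊢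
    rw [add_zero, norm_smul, Real.norm_eq_abs, abs_of_pos hapos]
    calc a * ‖x‖ ≤ 1 * ‖x‖ := by nlinarith [norm_nonneg x]
      _ < 1 := by linarith
  have key := heq a 0 0 haIoc h0 h0 hmap
  rw [smul_zero, add_zero] at key
  obtain ⟨hRpos, hRle⟩ := hR ((a, 0), 0) haIoc h0 h0
  nlinarith
end

section
/- Let X be the space of pairs (a, P) where a : 𝔻 → 𝔻 is an affine embedding a(x) = r·x + c (r > 0, image contained in 𝔻) and P ∈ 𝔻 with P ∉ closure(a(𝔻)). Let Y = {(d,P) ∈ 𝔻 × 𝔻 : d ≠ P}. Then the map X → Y sending (a,P) to (c,P) (replacing the disk by its center) is a homotopy equivalence. -/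
open Metric Set

lemma aux_img {E : Type*} [NormedAddCommGroup E] [NormedSpace ℝ E]
    (r : ℝ) (hr : 0 < r) (c : E) :
    (fun x => r • x + c) '' ball (0:E) 1 = ball c r := by
  ext y
  simp only [mem_image, mem_ball, dist_eq_norm, sub_zero]
  constructor
  · rintro ⟨x, hx, rfl⟩
    have : ‖r • x‖ < r := by
      rw [norm_smul, Real.norm_eq_abs, abs_of_pos hr]
      nlinarith [norm_nonneg x]
    simpa using this
  · intro hy
    refine ⟨r⁻¹ • (y - c), ?_, ?_⟩
    · rw [norm_smul, norm_inv, Real.norm_eq_abs, abs_of_pos hr, inv_mul_lt_iff₀ hr, mul_one]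
      exact hy
    · rw [smul_smul, mul_inv_cancel₀ hr.ne', one_smul]
      abel

lemma aux_clos {E : Type*} [NormedAddCommGroup E] [NormedSpace ℝ E]
    (r : ℝ) (hr : 0 < r) (c : E) :
    closure ((fun x => r • x + c) '' ball (0:E) 1) = closedBall c r := by
  rw [aux_img r hr c, closure_ball c hr.ne']

noncomputable def rho {E : Type*} [NormedAddCommGroup E] (c P : E) : ℝ :=
  min (dist c P) (1 - ‖c‖) / 2

lemma rho_pos {E : Type*} [NormedAddCommGroup E] {c P : E}
    (hc : c ∈ ball (0:E) 1) (hne : dist c P ≠ 0) : 0 < rho c P := by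
  have h1 : 0 < dist c P := lt_of_le_of_ne dist_nonneg (Ne.symm hne)
  have h2 : ‖c‖ < 1 := by simpa [mem_ball, dist_eq_norm] using hc
  have := lt_min h1 (by linarith : (0:ℝ) < 1 - ‖c‖)
  unfold rho; linarith

lemma rho_sum {E : Type*} [NormedAddCommGroup E] {c P : E}
    (hc : c ∈ ball (0:E) 1) : rho c P + ‖c‖ ≤ 1 := by
  have h2 : ‖c‖ < 1 := by simpa [mem_ball, dist_eq_norm] using hc
  have := min_le_right (dist c P) (1 - ‖c‖)
  unfold rho; linarith

lemma rho_lt {E : Type*} [NormedAddCommGroup E] {c P : E}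
    (hne : 0 < dist c P) : rho c P < dist P c := by
  have := min_le_left (dist c P) (1 - ‖c‖)
  rw [dist_comm P c]
  unfold rho; linarith

lemma rho_cont {E : Type*} [NormedAddCommGroup E] :
    Continuous (fun p : E × E => rho p.1 p.2) := by
  unfold rho
  fun_prop

/-- The space `X` of statement 8. -/
abbrev Xsp (n : ℕ) : Type :=
  {q : (ℝ × EuclideanSpace ℝ (Fin n)) × EuclideanSpace ℝ (Fin n) // 0 < q.1.1 ∧
    (∀ x ∈ ball (0 : EuclideanSpace ℝ (Fin n)) 1,
      q.1.1 • x + q.1.2 ∈ ball (0 : EuclideanSpace ℝ (Fin n)) 1) ∧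
    q.2 ∈ ball (0 : EuclideanSpace ℝ (Fin n)) 1 ∧
    q.2 ∉ closure ((fun x => q.1.1 • x + q.1.2) '' ball (0 : EuclideanSpace ℝ (Fin n)) 1)}

/-- The space `Y` of statement 8. -/
abbrev Ysp (n : ℕ) : Type :=
  {y : EuclideanSpace ℝ (Fin n) × EuclideanSpace ℝ (Fin n) //
    y.1 ∈ ball (0 : EuclideanSpace ℝ (Fin n)) 1 ∧
    y.2 ∈ ball (0 : EuclideanSpace ℝ (Fin n)) 1 ∧ y.1 ≠ y.2}

/-- Membership lemma for `X`. -/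
lemma mem_Xsp {n : ℕ} {r : ℝ} {c P : EuclideanSpace ℝ (Fin n)}
    (hr : 0 < r) (hsum : r + ‖c‖ ≤ 1)
    (hP : P ∈ ball (0 : EuclideanSpace ℝ (Fin n)) 1) (hd : r < dist P c) :
    0 < r ∧ (∀ x ∈ ball (0 : EuclideanSpace ℝ (Fin n)) 1,
        r • x + c ∈ ball (0 : EuclideanSpace ℝ (Fin n)) 1) ∧
      P ∈ ball (0 : EuclideanSpace ℝ (Fin n)) 1 ∧
      P ∉ closure ((fun x => r • x + c) '' ball (0 : EuclideanSpace ℝ (Fin n)) 1) := by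
  refine ⟨hr, fun x hx => ?_, hP, ?_⟩
  · rw [mem_ball_zero_iff] at hx ⊢
    calc ‖r • x + c‖ ≤ ‖r • x‖ + ‖c‖ := norm_add_le _ _
      _ = r * ‖x‖ + ‖c‖ := by rw [norm_smul, Real.norm_eq_abs, abs_of_pos hr]
      _ < 1 := by nlinarith [norm_nonneg x]
  · rw [aux_clos r hr, mem_closedBall, not_le]
    exact hd

lemma Xsp_center_mem {n : ℕ} (q : Xsp n) :
    q.1.1.2 ∈ ball (0 : EuclideanSpace ℝ (Fin n)) 1 := by
  simpa using q.2.2.1 0 (by simp)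

lemma Xsp_dist {n : ℕ} (q : Xsp n) : q.1.1.1 < dist q.1.2 q.1.1.2 := by
  have hcl := q.2.2.2.2
  rw [aux_clos _ q.2.1, mem_closedBall, not_le] at hcl
  exact hcl

/-- Membership of a convex combination of radii. -/
lemma mem_conv {n : ℕ} {r s t : ℝ} {c P : EuclideanSpace ℝ (Fin n)}
    (hr : 0 < r)
    (himr : ∀ x ∈ ball (0 : EuclideanSpace ℝ (Fin n)) 1,
      r • x + c ∈ ball (0 : EuclideanSpace ℝ (Fin n)) 1)
    (hdr : r < dist P c)
    (hs : 0 < s)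
    (hims : ∀ x ∈ ball (0 : EuclideanSpace ℝ (Fin n)) 1,
      s • x + c ∈ ball (0 : EuclideanSpace ℝ (Fin n)) 1)
    (hds : s < dist P c)
    (hP : P ∈ ball (0 : EuclideanSpace ℝ (Fin n)) 1)
    (ht0 : 0 ≤ t) (ht1 : t ≤ 1) :
    0 < (1 - t) * s + t * r ∧
      (∀ x ∈ ball (0 : EuclideanSpace ℝ (Fin n)) 1,
        ((1 - t) * s + t * r) • x + c ∈ ball (0 : EuclideanSpace ℝ (Fin n)) 1) ∧
      P ∈ ball (0 : EuclideanSpace ℝ (Fin n)) 1 ∧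
      P ∉ closure ((fun x => ((1 - t) * s + t * r) • x + c) ''
        ball (0 : EuclideanSpace ℝ (Fin n)) 1) := by
  have hpos : 0 < (1 - t) * s + t * r := by
    nlinarith [mul_le_mul_of_nonneg_left (min_le_left s r) (by linarith : (0:ℝ) ≤ 1 - t),
      mul_le_mul_of_nonneg_left (min_le_right s r) ht0, lt_min hs hr]
  refine ⟨hpos, fun x hx => ?_, hP, ?_⟩
  · have key : ((1 - t) * s + t * r) • x + c
        = (1 - t) • (s • x + c) + t • (r • x + c) := by module
    rw [key]
    exact (convex_ball (0 : EuclideanSpace ℝ (Fin n)) 1) (hims x hx) (himr x hx)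
      (by linarith) ht0 (by ring)
  · rw [aux_clos _ hpos, mem_closedBall, not_le]
    rcases eq_or_lt_of_le ht0 with rfl | ht0'
    · simpa using hds
    · nlinarith [mul_lt_mul_of_pos_left hdr ht0',
        mul_le_mul_of_nonneg_left hds.le (by linarith : (0:ℝ) ≤ 1 - t)]

/-- The forward map `X → Y`, `(r, c, P) ↦ (c, P)`. -/
noncomputable def Fmap (n : ℕ) : C(Xsp n, Ysp n) :=
  ⟨fun q => ⟨(q.1.1.2, q.1.2), Xsp_center_mem q, q.2.2.2.1, by
    intro h
    have hd := Xsp_dist q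
    rw [← h] at hd
    simp only [dist_self] at hd
    exact absurd hd (not_lt.2 q.2.1.le)⟩, by fun_prop⟩

/-- The backward map `Y → X`, `(d, P) ↦ (ρ(d,P), d, P)`. -/
noncomputable def Gmap (n : ℕ) : C(Ysp n, Xsp n) :=
  ⟨fun y => ⟨((rho y.1.1 y.1.2, y.1.1), y.1.2),
    mem_Xsp (rho_pos y.2.1 (dist_ne_zero.2 y.2.2.2)) (rho_sum y.2.1) y.2.2.1
      (rho_lt (dist_pos.2 y.2.2.2))⟩, by
    apply Continuous.subtype_mk
    unfold rho
    fun_prop⟩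

lemma Xsp_ne {n : ℕ} (q : Xsp n) : dist q.1.1.2 q.1.2 ≠ 0 := by
  rw [dist_comm]
  exact (lt_trans q.2.1 (Xsp_dist q)).ne'

/-- The homotopy from `Gmap ∘ Fmap` to the identity, moving the radius linearly. -/
noncomputable def Hmap (n : ℕ) :
    ContinuousMap.Homotopy ((Gmap n).comp (Fmap n)) (ContinuousMap.id (Xsp n)) where
  toFun := fun p =>
    ⟨(((1 - (p.1 : ℝ)) * rho p.2.1.1.2 p.2.1.2 + (p.1 : ℝ) * p.2.1.1.1,
        p.2.1.1.2), p.2.1.2), by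
      obtain ⟨t, q⟩ := p
      have hc := Xsp_center_mem q
      have hd := Xsp_dist q
      have hne := Xsp_ne q
      have hρ := mem_Xsp (rho_pos hc hne) (rho_sum hc) q.2.2.2.1
        (rho_lt (lt_of_le_of_ne dist_nonneg (Ne.symm hne)))
      exact mem_conv q.2.1 q.2.2.1 hd hρ.1 hρ.2.1
        (rho_lt (lt_of_le_of_ne dist_nonneg (Ne.symm hne))) q.2.2.2.1 t.2.1 t.2.2⟩
  continuous_toFun := by
    apply Continuous.subtype_mk
    unfold rho
    fun_prop
  map_zero_left := by
    intro q
    apply Subtype.ext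
    show (((1 - ((0:unitInterval) : ℝ)) * _ + _ * _, _), _) = _
    norm_num [Gmap, Fmap]
  map_one_left := by
    intro q
    apply Subtype.ext
    show (((1 - ((1:unitInterval) : ℝ)) * _ + _ * _, _), _) = _
    norm_num

/-- let `X` be the space of pairs `(a, P)` where `a(x) = r • x + c` is an
affine self-embedding of the open unit ball `𝔻 ⊆ ℝⁿ` and `P ∈ 𝔻` avoids the closure of
the image of `a`, and let `Y = {(d, P) ∈ 𝔻 × 𝔻 : d ≠ P}`. The map `(a, P) ↦ (c, P)`
(replace the disk by its center) is a homotopy equivalence. -/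
theorem stmt8 (n : ℕ) (hn : 1 ≤ n) :
    ∃ e : ContinuousMap.HomotopyEquiv
        {q : (ℝ × EuclideanSpace ℝ (Fin n)) × EuclideanSpace ℝ (Fin n) // 0 < q.1.1 ∧
          (∀ x ∈ ball (0 : EuclideanSpace ℝ (Fin n)) 1,
            q.1.1 • x + q.1.2 ∈ ball (0 : EuclideanSpace ℝ (Fin n)) 1) ∧
          q.2 ∈ ball (0 : EuclideanSpace ℝ (Fin n)) 1 ∧
          q.2 ∉ closure ((fun x => q.1.1 • x + q.1.2) '' ball (0 : EuclideanSpace ℝ (Fin n)) 1)}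
        {y : EuclideanSpace ℝ (Fin n) × EuclideanSpace ℝ (Fin n) //
          y.1 ∈ ball (0 : EuclideanSpace ℝ (Fin n)) 1 ∧
          y.2 ∈ ball (0 : EuclideanSpace ℝ (Fin n)) 1 ∧ y.1 ≠ y.2},
      ∀ x, (e.toFun x).1 = (x.1.1.2, x.1.2) := by
  exact ⟨⟨Fmap n, Gmap n, ⟨Hmap n⟩,
    ((ContinuousMap.ext fun y => Subtype.ext rfl : (Fmap n).comp (Gmap n) = ContinuousMap.id (Ysp n)) ▸
      ContinuousMap.Homotopic.refl _)⟩,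
    fun x => rfl⟩
end

section
/- Let X_0 = {*}, X_1 = 𝔻, X_2 = {(a,P) : a an affine self-embedding of 𝔻, P ∈ 𝔻}, with face maps d_0[P] = *, d_1[P] = *, and d_0[a,P] = [P], d_1[a,P] = [a(P)], d_2[a,P] = [a(0)]. Suppose s_0 : X_0 → X_1 and s_1 : X_1 → X_2 are continuous maps satisfying the simplicial identities d_0 s_1 = s_0 d_0, d_1 s_1 = id, d_2 s_1 = id. Then s_0(*) = 0 and there exists a continuous function r : 𝔻 → (0,1] such that s_1[P] = [x ↦ r(P)·x + P, 0] for all P ∈ 𝔻. -/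
open Metric Set

/-- with `X_0 = {*}`, `X_1 = 𝔻`, `X_2` the space of pairs `(a, P)` of an
affine self-embedding `a(x) = r • x + c` of `𝔻` and `P ∈ 𝔻` (encoded as `((r, c), P)`),
faces `d_0[a,P] = [P]`, `d_1[a,P] = [a(P)]`, `d_2[a,P] = [a(0)] = [c]`: if `s_0` picks out
`A ∈ 𝔻` and `s_1` is continuous with `d_0 s_1 = s_0 d_0`, `d_1 s_1 = id`, `d_2 s_1 = id`,
then `A = 0` and `s_1[P] = [x ↦ r(P) • x + P, 0]` for a continuous `r : 𝔻 → (0,1]`. -/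
theorem stmt11 (n : ℕ) (hn : 1 ≤ n)
    (A : EuclideanSpace ℝ (Fin n)) (hA : A ∈ ball (0 : EuclideanSpace ℝ (Fin n)) 1)
    (s₁ : EuclideanSpace ℝ (Fin n) → (ℝ × EuclideanSpace ℝ (Fin n)) × EuclideanSpace ℝ (Fin n))
    (hcont : ContinuousOn s₁ (ball (0 : EuclideanSpace ℝ (Fin n)) 1))
    (hvalid : ∀ P ∈ ball (0 : EuclideanSpace ℝ (Fin n)) 1,
      0 < (s₁ P).1.1 ∧
      (∀ x ∈ ball (0 : EuclideanSpace ℝ (Fin n)) 1,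
        (s₁ P).1.1 • x + (s₁ P).1.2 ∈ ball (0 : EuclideanSpace ℝ (Fin n)) 1) ∧
      (s₁ P).2 ∈ ball (0 : EuclideanSpace ℝ (Fin n)) 1)
    -- `d_0 s_1 = s_0 d_0` : the point entry of `s₁ P` is `A`
    (hd0 : ∀ P ∈ ball (0 : EuclideanSpace ℝ (Fin n)) 1, (s₁ P).2 = A)
    -- `d_1 s_1 = id` : `a(Q) = P`
    (hd1 : ∀ P ∈ ball (0 : EuclideanSpace ℝ (Fin n)) 1,
      (s₁ P).1.1 • (s₁ P).2 + (s₁ P).1.2 = P)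
    -- `d_2 s_1 = id` : `a(0) = c = P`
    (hd2 : ∀ P ∈ ball (0 : EuclideanSpace ℝ (Fin n)) 1, (s₁ P).1.2 = P) :
    A = 0 ∧ ∃ r : EuclideanSpace ℝ (Fin n) → ℝ,
      ContinuousOn r (ball (0 : EuclideanSpace ℝ (Fin n)) 1) ∧
      ∀ P ∈ ball (0 : EuclideanSpace ℝ (Fin n)) 1,
        r P ∈ Ioc (0 : ℝ) 1 ∧ s₁ P = ((r P, P), 0) := by
  have hA0 : A = 0 := by
    have h1 := hd1 A hA
    rw [hd0 A hA, hd2 A hA] at h1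
    have : (s₁ A).1.1 • A = 0 := by
      have := congrArg (fun x => x - A) h1
      simpa using this
    rcases smul_eq_zero.1 this with h | h
    · exact absurd h (ne_of_gt (hvalid A hA).1)
    · exact h
  refine ⟨hA0, fun P => (s₁ P).1.1, hcont.fst.fst, fun P hP => ?_⟩
  obtain ⟨hrpos, himg, -⟩ := hvalid P hP
  have hPn : ‖P‖ < 1 := by simpa [mem_ball, dist_eq_norm] using hP
  have hPnn : (0:ℝ) ≤ ‖P‖ := norm_nonneg P
  -- unit vector u with P = ‖P‖ • u
  obtain ⟨u, hu, hPu⟩ : ∃ u : EuclideanSpace ℝ (Fin n), ‖u‖ = 1 ∧ P = ‖P‖ • u := by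
    by_cases hP0 : P = 0
    · refine ⟨EuclideanSpace.single ⟨0, hn⟩ (1:ℝ), ?_, by simp [hP0]⟩
      simp [EuclideanSpace.norm_single]
    · refine ⟨‖P‖⁻¹ • P, ?_, ?_⟩
      · rw [norm_smul, norm_inv, norm_norm, inv_mul_cancel₀ (norm_ne_zero_iff.2 hP0)]
      · rw [smul_smul, mul_inv_cancel₀ (norm_ne_zero_iff.2 hP0), one_smul]
  set r := (s₁ P).1.1 with hrdef
  have hr1 : r ≤ 1 := by
    by_contra hle
    push_neg at hle
    set t : ℝ := (1 - ‖P‖) / r with ht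
    have h1P : 0 < 1 - ‖P‖ := by linarith
    have ht0 : 0 ≤ t := le_of_lt (div_pos h1P hrpos)
    have ht1 : t < 1 := by
      rw [div_lt_one hrpos]; linarith
    have hx : t • u ∈ ball (0 : EuclideanSpace ℝ (Fin n)) 1 := by
      simp only [mem_ball, dist_eq_norm, sub_zero, norm_smul, hu, mul_one,
        Real.norm_eq_abs, abs_of_nonneg ht0]
      exact ht1
    have := himg (t • u) hx
    rw [hd2 P hP] at this
    simp only [mem_ball, dist_eq_norm, sub_zero] at this
    have hrt : r * t = 1 - ‖P‖ := by
      rw [ht, mul_div_cancel₀ _ (ne_of_gt hrpos)]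
    have hcalc : r • (t • u) + P = ((r * t) + ‖P‖) • u := by
      nth_rewrite 1 [hPu]
      rw [smul_smul, add_smul]
    rw [hcalc, hrt, show (1:ℝ) - ‖P‖ + ‖P‖ = 1 by ring, one_smul, hu] at this
    exact lt_irrefl 1 this
  refine ⟨⟨hrpos, hr1⟩, ?_⟩
  have h2 := hd0 P hP
  rw [hA0] at h2
  exact Prod.ext (Prod.ext rfl (hd2 P hP)) h2
end

section
/- The semi-simplicial space X with X_0 = {*}, X_k the space of lists [a₁,…,a_{k−1},P] of affine self-embeddings of the open unit ball 𝔻 ⊂ ℝⁿ followed by a point P ∈ 𝔻, with the face maps d_0 = drop first, d_i = compose i-th and (i+1)-st embedding, d_{k−1} = evaluate last embedding at P, d_k = evaluate last embedding at 0, admits no system of continuous degeneracy maps s_i : X_i → X_{i+1} making it a simplicial space (i.e. satisfying all simplicial identities involving the given faces). -/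
open Metric

/-- `Sp n k` models the space `X_k`: for `k ≥ 1` a list of `k - 1` affine maps
`x ↦ r • x + c` (encoded as pairs `(r, c)`) together with a point `P`; `X_0` is a point. -/
def Sp (n : ℕ) : ℕ → Type
  | 0 => PUnit
  | k + 1 => (Fin k → ℝ × EuclideanSpace ℝ (Fin n)) × EuclideanSpace ℝ (Fin n)

noncomputable instance (n k : ℕ) : TopologicalSpace (Sp n k) :=
  match k with
  | 0 => (inferInstance : TopologicalSpace PUnit)
  | k + 1 => (inferInstance : TopologicalSpace
      ((Fin k → ℝ × EuclideanSpace ℝ (Fin n)) × EuclideanSpace ℝ (Fin n)))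

/-- Evaluation of the affine map encoded by `(r, c)`. -/
noncomputable def aff (n : ℕ) (a : ℝ × EuclideanSpace ℝ (Fin n))
    (x : EuclideanSpace ℝ (Fin n)) : EuclideanSpace ℝ (Fin n) := a.1 • x + a.2

/-- Composition of affine maps: `(r x + c) ∘ (r' x + c') = r r' x + (r c' + c)`. -/
noncomputable def affComp (n : ℕ) (a b : ℝ × EuclideanSpace ℝ (Fin n)) :
    ℝ × EuclideanSpace ℝ (Fin n) := (a.1 * b.1, a.1 • b.2 + a.2)

/-- The face maps `d_i : X_{k+1} → X_k`: `d_0` drops the first map, `d_i` (for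
`1 ≤ i ≤ k - 1`) composes the `i`-th and `(i+1)`-st maps, `d_k` evaluates the last map
at `P`, and `d_{k+1}` evaluates the last map at `0`. -/
noncomputable def face (n : ℕ) : ∀ {k : ℕ}, ℕ → Sp n (k + 1) → Sp n k
  | 0, _, _ => PUnit.unit
  | k + 1, i, x =>
    if i = 0 then (fun j => x.1 j.succ, x.2)
    else if i ≤ k then
      (fun j => if (j : ℕ) + 1 < i then x.1 (Fin.castSucc j)
        else if (j : ℕ) + 1 = i then affComp n (x.1 (Fin.castSucc j)) (x.1 j.succ)
        else x.1 j.succ, x.2)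
    else if i = k + 1 then (fun j => x.1 (Fin.castSucc j), aff n (x.1 (Fin.last k)) x.2)
    else (fun j => x.1 (Fin.castSucc j), aff n (x.1 (Fin.last k)) 0)

/-- Validity: each affine map has positive ratio and sends the open unit ball `𝔻` into
itself, and the point lies in `𝔻`. -/
def Valid (n : ℕ) : ∀ {k : ℕ}, Sp n k → Prop
  | 0, _ => True
  | _ + 1, x => (∀ j, 0 < (x.1 j).1 ∧
      ∀ y ∈ ball (0 : EuclideanSpace ℝ (Fin n)) 1,
        aff n (x.1 j) y ∈ ball (0 : EuclideanSpace ℝ (Fin n)) 1) ∧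
    x.2 ∈ ball (0 : EuclideanSpace ℝ (Fin n)) 1

/-- the semi-simplicial space `X` of configurations of affine
self-embeddings of the unit ball followed by a point admits no system of continuous
degeneracy maps `s_k : X_k → X_{k+1}` satisfying the simplicial identities
`d_i s_k = s_{k-1} d_i` (`i < k`) and `d_k s_k = id = d_{k+1} s_k`. -/
theorem stmt13 (n : ℕ) (hn : 1 ≤ n) :
    ¬ ∃ s : ∀ k : ℕ, Sp n k → Sp n (k + 1),
      (∀ k, ContinuousOn (s k) {x : Sp n k | Valid n x}) ∧
      (∀ k (x : Sp n k), Valid n x → Valid n (s k x)) ∧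
      (∀ k (x : Sp n (k + 1)), Valid n x → ∀ i : ℕ, i < k + 1 →
        face n i (s (k + 1) x) = s k (face n i x)) ∧
      (∀ k (x : Sp n k), Valid n x →
        face n k (s k x) = x ∧ face n (k + 1) (s k x) = x) := by
  rintro ⟨s, hcont, hval, hcomm, hid⟩
  have h01 : (0 : EuclideanSpace ℝ (Fin n)) ∈ ball (0 : EuclideanSpace ℝ (Fin n)) 1 :=
    mem_ball_self one_pos
  -- the basepoint of X_1
  set x₁ : Sp n 1 := ((fun j => j.elim0, 0) :
    (Fin 0 → ℝ × EuclideanSpace ℝ (Fin n)) × EuclideanSpace ℝ (Fin n)) with hx₁def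
  have hx₁ : Valid n x₁ := ⟨fun j => j.elim0, h01⟩
  -- x₂ : the map y ↦ (1/2) y together with point 0
  have hhalf : ∀ y ∈ ball (0 : EuclideanSpace ℝ (Fin n)) 1,
      aff n ((1/2 : ℝ), (0 : EuclideanSpace ℝ (Fin n))) y ∈
        ball (0 : EuclideanSpace ℝ (Fin n)) 1 := by
    intro y hy
    simp only [aff, add_zero, mem_ball, dist_zero_right] at *
    rw [norm_smul]
    simp only [Real.norm_eq_abs]
    nlinarith [norm_nonneg y, abs_of_pos (by norm_num : (0:ℝ) < 1/2)]
  set x₂ : Sp n 2 := ((fun _ => ((1/2 : ℝ), (0 : EuclideanSpace ℝ (Fin n))), 0) :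
    (Fin 1 → ℝ × EuclideanSpace ℝ (Fin n)) × EuclideanSpace ℝ (Fin n)) with hx₂def
  have hx₂ : Valid n x₂ := ⟨fun j => ⟨by norm_num, hhalf⟩, h01⟩
  -- abbreviations
  set A : Fin 1 → ℝ × EuclideanSpace ℝ (Fin n) := (s 1 x₁).1 with hAdef
  set B : Fin 2 → ℝ × EuclideanSpace ℝ (Fin n) := (s 2 x₂).1 with hBdef
  have hR : 0 < (A 0).1 := ((hval 1 x₁ hx₁).1 0).1
  -- faces of x₂ are x₁
  have hf0 : face n 0 x₂ = x₁ := by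
    simp only [face, if_pos rfl]
    exact Prod.ext (funext fun j => j.elim0) rfl
  have hf1 : face n 1 x₂ = x₁ := by
    simp only [face, aff]
    norm_num
    exact Prod.ext (funext fun j => j.elim0) (by simp [hx₂def, hx₁def])
  -- identity i = 0: B 1 = A 0 (and more)
  have h0 := hcomm 1 x₂ hx₂ 0 (by norm_num)
  rw [hf0] at h0
  simp only [face, if_pos rfl] at h0
  have hB1 : B ((0 : Fin 1).succ) = A 0 := by
    have := congrArg Prod.fst h0
    exact congrFun this 0
  -- identity i = 1: affComp (B 0) (B 1) = A 0
  have h1 := hcomm 1 x₂ hx₂ 1 (by norm_num)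
  rw [hf1] at h1
  simp only [face] at h1
  norm_num at h1
  have hBB : affComp n (B (Fin.castSucc 0)) (B ((0 : Fin 1).succ)) = A 0 := by
    have := congrArg Prod.fst h1
    have h := congrFun this 0
    simpa using h
  -- identity d_2 s_2 = id : B 0 = (1/2, 0)
  have h2 := (hid 2 x₂ hx₂).1
  simp only [face] at h2
  norm_num at h2
  have hB0 : B (Fin.castSucc 0) = x₂.1 0 :=
    congrFun (congrArg Prod.fst h2) 0
  -- combine
  rw [hB0, hB1] at hBB
  have hfin := congrArg Prod.fst hBB
  simp only [affComp, hx₂def] at hfin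
  norm_num at hfin
  linarith
end
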